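/- arXiv:2105.08013 — 7 statements merged into one kernel-verified Lean document; each statement's English description precedes it below -/
import Mathlib

section
/- For every subject t ∈ {1,…,n} and every variable j ∈ {1,…,d}, the uniqueness Shapley value satisfies φ_{t,j} ≥ 0; moreover, φ_{t,j} = 0 if and only if x_{ij} = x_{tj} for all i ∈ {1,…,n}. -/
open Finset

variable {n d : ℕ} {X : Fin d → Type} [∀ j, Fintype (X j)] [∀ j, DecidableEq (X j)]

/-- Number of subjects matching subject `t` on every variable in `u`. -/
def cohortN (x : Fin n → ∀ j, X j) (t : Fin n) (u : Finset (Fin d)) : ℕ :=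
  (Finset.univ.filter fun i => ∀ j ∈ u, x i j = x t j).card

/-- Value function `val_t(u) = -log₂(N_t(u)/n)`. -/
noncomputable def uVal (x : Fin n → ∀ j, X j) (t : Fin n) (u : Finset (Fin d)) : ℝ :=
  -Real.logb 2 ((cohortN x t u : ℝ) / n)

/-- Uniqueness Shapley value of variable `j` for subject `t`. -/
noncomputable def uShap (x : Fin n → ∀ j, X j) (t : Fin n) (j : Fin d) : ℝ :=
  (d : ℝ)⁻¹ * ∑ u ∈ ((Finset.univ : Finset (Fin d)).erase j).powerset,
    ((d - 1).choose u.card : ℝ)⁻¹ * (uVal x t (insert j u) - uVal x t u)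

/-- Global uniqueness Shapley value. -/
noncomputable def uShapGlobal (x : Fin n → ∀ j, X j) (j : Fin d) : ℝ :=
  (n : ℝ)⁻¹ * ∑ t, uShap x t j

/-- Marginal empirical probability of observing `z` on the variables in `u`. -/
noncomputable def margP (x : Fin n → ∀ j, X j) (u : Finset (Fin d))
    (z : ∀ j : u, X j.1) : ℝ :=
  ((Finset.univ.filter fun i : Fin n => ∀ j : u, x i j.1 = z j).card : ℝ) / n

/-- Empirical entropy of the variables in `u` (convention `0·log₂ 0 = 0` holds automatically). -/
noncomputable def emEnt (x : Fin n → ∀ j, X j) (u : Finset (Fin d)) : ℝ :=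
  -∑ z : (∀ j : u, X j.1), margP x u z * Real.logb 2 (margP x u z)

lemma cohortN_pos' (x : Fin n → ∀ j, X j) (t : Fin n) (u : Finset (Fin d)) :
    0 < cohortN x t u :=
  Finset.card_pos.2 ⟨t, by simp [cohortN]⟩

lemma cohortN_insert_le' (x : Fin n → ∀ j, X j) (t : Fin n) (j : Fin d) (u : Finset (Fin d)) :
    cohortN x t (insert j u) ≤ cohortN x t u := by
  apply Finset.card_le_card
  intro i hi
  simp only [Finset.mem_filter, Finset.mem_univ, true_and] at hi ⊢
  exact fun k hk => hi k (Finset.mem_insert_of_mem hk)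

lemma uVal_diff_nonneg' (hn : 0 < n) (x : Fin n → ∀ j, X j) (t : Fin n) (j : Fin d)
    (u : Finset (Fin d)) : 0 ≤ uVal x t (insert j u) - uVal x t u := by
  unfold uVal
  have hn' : (0:ℝ) < n := by exact_mod_cast hn
  have ha : (0:ℝ) < (cohortN x t (insert j u) : ℝ) / n :=
    div_pos (by exact_mod_cast cohortN_pos' x t _) hn'
  have hle : (cohortN x t (insert j u) : ℝ) / n ≤ (cohortN x t u : ℝ) / n := by
    gcongr
    exact_mod_cast cohortN_insert_le' x t j u
  have := Real.logb_le_logb_of_le (one_lt_two) ha hle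
  linarith

lemma uVal_diff_pos' (hn : 0 < n) (x : Fin n → ∀ j, X j) (t : Fin n) (j : Fin d)
    (u : Finset (Fin d)) (h : cohortN x t (insert j u) < cohortN x t u) :
    0 < uVal x t (insert j u) - uVal x t u := by
  unfold uVal
  have hn' : (0:ℝ) < n := by exact_mod_cast hn
  have ha : (0:ℝ) < (cohortN x t (insert j u) : ℝ) / n :=
    div_pos (by exact_mod_cast cohortN_pos' x t _) hn'
  have hlt : (cohortN x t (insert j u) : ℝ) / n < (cohortN x t u : ℝ) / n := by
    have hc : ((cohortN x t (insert j u)) : ℝ) < (cohortN x t u : ℝ) := by exact_mod_cast h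
    exact div_lt_div_of_pos_right hc hn'
  have := Real.logb_lt_logb (one_lt_two) ha hlt
  linarith

/-- the uniqueness Shapley value `φ_{t,j}` is nonnegative, and it is zero
if and only if every subject matches subject `t` on variable `j`. -/
theorem uniquenessShapley_nonneg_and_eq_zero_iff
    (n d : ℕ) (hn : 1 ≤ n) (hd : 1 ≤ d)
    (X : Fin d → Type) [∀ j, Fintype (X j)] [∀ j, DecidableEq (X j)]
    (x : Fin n → ∀ j, X j) (t : Fin n) (j : Fin d) :
    0 ≤ uShap x t j ∧ (uShap x t j = 0 ↔ ∀ i, x i j = x t j) := by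
  have hn0 : 0 < n := hn
  -- positivity of each coefficient
  have hchoose : ∀ u ∈ ((Finset.univ : Finset (Fin d)).erase j).powerset,
      (0:ℝ) < ((d - 1).choose u.card : ℝ)⁻¹ := by
    intro u hu
    have hsub : u ⊆ (Finset.univ : Finset (Fin d)).erase j := Finset.mem_powerset.1 hu
    have hcard : u.card ≤ d - 1 := by
      have := Finset.card_le_card hsub
      simpa [Finset.card_erase_of_mem, Finset.card_univ] using this
    have := Nat.choose_pos hcard
    positivity
  -- nonnegativity of each term
  have hterm : ∀ u ∈ ((Finset.univ : Finset (Fin d)).erase j).powerset,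
      (0:ℝ) ≤ ((d - 1).choose u.card : ℝ)⁻¹ * (uVal x t (insert j u) - uVal x t u) := by
    intro u hu
    exact mul_nonneg (le_of_lt (hchoose u hu)) (uVal_diff_nonneg' hn0 x t j u)
  have hsum : (0:ℝ) ≤ ∑ u ∈ ((Finset.univ : Finset (Fin d)).erase j).powerset,
      ((d - 1).choose u.card : ℝ)⁻¹ * (uVal x t (insert j u) - uVal x t u) :=
    Finset.sum_nonneg hterm
  have hdinv : (0:ℝ) < (d:ℝ)⁻¹ := by
    have : (0:ℝ) < d := by exact_mod_cast hd
    positivity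
  constructor
  · exact mul_nonneg (le_of_lt hdinv) hsum
  constructor
  · -- uShap = 0 → all match
    intro h0
    have hsum0 : ∑ u ∈ ((Finset.univ : Finset (Fin d)).erase j).powerset,
        ((d - 1).choose u.card : ℝ)⁻¹ * (uVal x t (insert j u) - uVal x t u) = 0 := by
      rcases mul_eq_zero.1 h0 with h | h
      · exact absurd h (ne_of_gt hdinv)
      · exact h
    have hall := (Finset.sum_eq_zero_iff_of_nonneg hterm).1 hsum0
    have hmem : (∅ : Finset (Fin d)) ∈ ((Finset.univ : Finset (Fin d)).erase j).powerset :=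
      Finset.mem_powerset.2 (Finset.empty_subset _)
    have h1 := hall ∅ hmem
    have hdiff : uVal x t (insert j ∅) - uVal x t ∅ = 0 := by
      rcases mul_eq_zero.1 h1 with h | h
      · exact absurd h (ne_of_gt (hchoose ∅ hmem))
      · exact h
    -- hence cohortN are equal
    have hNeq : cohortN x t (insert j ∅) = cohortN x t ∅ := by
      by_contra hne
      have hlt : cohortN x t (insert j ∅) < cohortN x t ∅ :=
        lt_of_le_of_ne (cohortN_insert_le' x t j ∅) hne
      exact absurd hdiff (ne_of_gt (uVal_diff_pos' hn0 x t j ∅ hlt))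
    have hNempty : cohortN x t ∅ = n := by
      simp [cohortN]
    have huniv : (Finset.univ.filter fun i : Fin n => ∀ k ∈ insert j (∅ : Finset (Fin d)),
        x i k = x t k) = Finset.univ := by
      apply Finset.eq_univ_of_card
      rw [Fintype.card_fin]
      exact hNeq.trans hNempty
    intro i
    have := Finset.mem_filter.1 (huniv ▸ Finset.mem_univ i)
    exact this.2 j (Finset.mem_insert_self j ∅)
  · -- all match → uShap = 0
    intro hmatch
    have hcoh : ∀ u : Finset (Fin d), cohortN x t (insert j u) = cohortN x t u := by
      intro u
      unfold cohortN
      congr 1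
      apply Finset.filter_congr
      intro i _
      constructor
      · intro h k hk; exact h k (Finset.mem_insert_of_mem hk)
      · intro h k hk
        rcases Finset.mem_insert.1 hk with rfl | hk
        · exact hmatch i
        · exact h k hk
    have : ∀ u ∈ ((Finset.univ : Finset (Fin d)).erase j).powerset,
        ((d - 1).choose u.card : ℝ)⁻¹ * (uVal x t (insert j u) - uVal x t u) = 0 := by
      intro u _
      have : uVal x t (insert j u) = uVal x t u := by
        unfold uVal; rw [hcoh u]
      rw [this]; ring
    unfold uShap
    rw [Finset.sum_eq_zero this, mul_zero]
end

section
/- The global uniqueness Shapley value of variable j is a weighted sum of conditional empirical entropies: φ^{1:n}_j = (1/d) Σ_{u ⊆ {1,…,d}∖{j}} binom(d−1,|u|)⁻¹ 𝓗(j|u). -/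
open Finset

variable {n d : ℕ} {X : Fin d → Type} [∀ j, Fintype (X j)] [∀ j, DecidableEq (X j)]

lemma avg_uVal (hn : 1 ≤ n) (x : Fin n → ∀ j, X j) (u : Finset (Fin d)) :
    (n : ℝ)⁻¹ * ∑ t, uVal x t u = emEnt x u := by
  classical
  have hn' : (n : ℝ) ≠ 0 := Nat.cast_ne_zero.mpr (by omega)
  set g : Fin n → (∀ j : u, X j.1) := fun t j => x t j.1 with hg
  have hfib : ∑ z : (∀ j : u, X j.1), ∑ t ∈ univ.filter (fun t => g t = z), uVal x t u
      = ∑ t, uVal x t u := Finset.sum_fiberwise_of_maps_to (fun t _ => mem_univ _) _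
  rw [← hfib, Finset.mul_sum, emEnt, ← Finset.sum_neg_distrib]
  refine Finset.sum_congr rfl fun z _ => ?_
  set c : ℕ := (Finset.univ.filter fun i : Fin n => ∀ j : u, x i j.1 = z j).card with hc
  have hfil : (univ.filter fun t => g t = z)
      = (Finset.univ.filter fun i : Fin n => ∀ j : u, x i j.1 = z j) := by
    apply Finset.filter_congr
    intro t _
    simp [hg, funext_iff]
  have hconst : ∀ t ∈ univ.filter (fun t => g t = z),
      uVal x t u = -Real.logb 2 ((c : ℝ) / n) := by
    intro t ht
    simp only [mem_filter, mem_univ, true_and] at ht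
    have hco : cohortN x t u = c := by
      rw [cohortN, hc]
      congr 1
      apply Finset.filter_congr
      intro i _
      constructor
      · intro h jj
        rw [h jj.1 jj.2]
        exact congrFun ht jj
      · intro h jj hjj
        rw [h ⟨jj, hjj⟩]
        exact (congrFun ht ⟨jj, hjj⟩).symm
    rw [uVal, hco]
  rw [Finset.sum_congr rfl hconst, Finset.sum_const, hfil]
  rw [margP, ← hc]
  rcases Nat.eq_zero_or_pos c with h0 | hpos
  · simp [h0]
  · rw [nsmul_eq_mul]
    field_simp

lemma main_aux
    {n d : ℕ} {X : Fin d → Type} [∀ j, Fintype (X j)] [∀ j, DecidableEq (X j)]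
    (hn : 1 ≤ n) (x : Fin n → ∀ j, X j) (j : Fin d) :
    (n : ℝ)⁻¹ * ∑ t, ((d : ℝ)⁻¹ * ∑ u ∈ ((Finset.univ : Finset (Fin d)).erase j).powerset,
      ((d - 1).choose u.card : ℝ)⁻¹ * (uVal x t (insert j u) - uVal x t u))
      = (d : ℝ)⁻¹ * ∑ u ∈ ((Finset.univ : Finset (Fin d)).erase j).powerset,
          ((d - 1).choose u.card : ℝ)⁻¹ * (emEnt x (insert j u) - emEnt x u) := by
  rw [← Finset.mul_sum, ← mul_assoc, mul_comm ((n:ℝ)⁻¹) ((d:ℝ)⁻¹), mul_assoc]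
  congr 1
  rw [Finset.sum_comm, Finset.mul_sum]
  refine Finset.sum_congr rfl fun u _ => ?_
  rw [← avg_uVal hn x (insert j u), ← avg_uVal hn x u, ← Finset.mul_sum,
    Finset.sum_sub_distrib]
  ring

/-- the global uniqueness Shapley value of variable `j` is a weighted sum of
conditional empirical entropies `𝓗(j|u) = 𝓗(u∪{j}) - 𝓗(u)`. -/
theorem globalUniquenessShapley_eq_weighted_condEntropies
    (n d : ℕ) (hn : 1 ≤ n) (hd : 1 ≤ d)
    (X : Fin d → Type) [∀ j, Fintype (X j)] [∀ j, DecidableEq (X j)]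
    (x : Fin n → ∀ j, X j) (j : Fin d) :
    uShapGlobal x j
      = (d : ℝ)⁻¹ * ∑ u ∈ ((Finset.univ : Finset (Fin d)).erase j).powerset,
          ((d - 1).choose u.card : ℝ)⁻¹ * (emEnt x (insert j u) - emEnt x u) := by
  simp only [uShapGlobal, uShap]
  exact main_aux hn x j
end

section
/- If d = 2, then the global uniqueness Shapley value of variable 1 satisfies φ^{1:n}_1 = (1/2)·𝓗({1}) + (1/2)·𝓗({1}|{2}). -/
open Finset

variable {n d : ℕ} {X : Fin d → Type} [∀ j, Fintype (X j)] [∀ j, DecidableEq (X j)]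

/-- for `d = 2`, the global uniqueness Shapley value of the first variable is
`φ^{1:n}_1 = (1/2)𝓗({1}) + (1/2)𝓗({1}|{2})` (variables `1,2` are indices `0,1 : Fin 2`). -/
theorem globalUniquenessShapley_two_vars
    (n : ℕ) (hn : 1 ≤ n)
    (X : Fin 2 → Type) [∀ j, Fintype (X j)] [∀ j, DecidableEq (X j)]
    (x : Fin n → ∀ j, X j) :
    uShapGlobal x 0
      = (1 / 2) * emEnt x {0} + (1 / 2) * (emEnt x {0, 1} - emEnt x {1}) := by
  classical
  have hn0 : (n : ℝ) ≠ 0 := by positivity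
  have hpow : (((Finset.univ : Finset (Fin 2)).erase 0).powerset : Finset (Finset (Fin 2)))
      = {∅, {1}} := by decide
  have hval0 : ∀ t, uVal x t (∅ : Finset (Fin 2)) = 0 := by
    intro t
    have : cohortN x t (∅ : Finset (Fin 2)) = n := by
      simp [cohortN]
    rw [uVal, this, div_self hn0]
    simp
  have hshap : ∀ t, uShap x t 0
      = (1/2) * (uVal x t {0} + (uVal x t {0,1} - uVal x t {1})) := by
    intro t
    rw [uShap, hpow]
    rw [Finset.sum_insert (by decide), Finset.sum_singleton]
    have h1 : insert (0 : Fin 2) (∅ : Finset (Fin 2)) = {0} := by decide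
    have h2 : insert (0 : Fin 2) ({1} : Finset (Fin 2)) = {0,1} := by decide
    rw [h1, h2, hval0]
    norm_num
  have hsum : (n:ℝ)⁻¹ * ∑ t, uShap x t 0
      = (1/2) * ((n:ℝ)⁻¹ * ∑ t, uVal x t {0})
        + (1/2) * ((n:ℝ)⁻¹ * ∑ t, uVal x t {0,1} - (n:ℝ)⁻¹ * ∑ t, uVal x t {1}) := by
    rw [Finset.sum_congr rfl (fun t _ => hshap t)]
    rw [Finset.sum_congr rfl (fun t _ => mul_add (1/2:ℝ) _ _),
      Finset.sum_add_distrib, Finset.mul_sum, Finset.mul_sum]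
    simp only [← Finset.mul_sum, Finset.sum_sub_distrib]
    ring
  rw [uShapGlobal, hsum, avg_uVal hn, avg_uVal hn, avg_uVal hn]
end

section
/- If d = 3, then the global uniqueness Shapley value of variable 1 satisfies φ^{1:n}_1 = (1/3)·𝓗({1}) + (1/6)·𝓗({1}|{2}) + (1/6)·𝓗({1}|{3}) + (1/3)·𝓗({1}|{2,3}). -/
open Finset

variable {n d : ℕ} {X : Fin d → Type} [∀ j, Fintype (X j)] [∀ j, DecidableEq (X j)]

lemma sum_uVal (x : Fin n → ∀ j, X j) (hn : (n:ℝ) ≠ 0) (u : Finset (Fin d)) :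
    ∑ t, uVal x t u = n * emEnt x u := by
  have hval : ∀ t : Fin n, uVal x t u
      = -Real.logb 2 (margP x u (fun j => x t j.1)) := by
    intro t
    unfold uVal margP cohortN
    have : (Finset.univ.filter fun i : Fin n => ∀ j ∈ u, x i j = x t j)
        = Finset.univ.filter fun i : Fin n => ∀ j : u, x i j.1 = x t j.1 := by
      apply Finset.filter_congr
      intro i _
      constructor
      · intro h j; exact h j.1 j.2
      · intro h j hj; exact h ⟨j, hj⟩
    rw [this]
  have hcard : ∀ z : (∀ j : u, X j.1),
      ((Finset.univ.filter fun t : Fin n => (fun j : u => x t j.1) = z).card : ℝ)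
        = margP x u z * n := by
    intro z
    unfold margP
    rw [div_mul_cancel₀ _ hn]
    norm_cast
    congr 1
    apply Finset.filter_congr
    intro i _
    simp [funext_iff]
  calc ∑ t, uVal x t u
      = ∑ t, -Real.logb 2 (margP x u (fun j => x t j.1)) := Finset.sum_congr rfl fun t _ => hval t
    _ = ∑ z : (∀ j : u, X j.1), ∑ t ∈ Finset.univ.filter
          (fun t : Fin n => (fun j : u => x t j.1) = z),
          -Real.logb 2 (margP x u (fun j => x t j.1)) :=
        (Finset.sum_fiberwise _ _ _).symm
    _ = ∑ z : (∀ j : u, X j.1), (margP x u z * n) * -Real.logb 2 (margP x u z) := by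
        refine Finset.sum_congr rfl fun z _ => ?_
        rw [Finset.sum_congr rfl (fun t ht => ?_), Finset.sum_const, nsmul_eq_mul, hcard]
        rw [(Finset.mem_filter.mp ht).2]
    _ = n * emEnt x u := by
        unfold emEnt
        rw [mul_neg, Finset.mul_sum, ← Finset.sum_neg_distrib]
        exact Finset.sum_congr rfl fun z _ => by ring

lemma emEnt_empty (x : Fin n → ∀ j, X j) (hn : (n:ℝ) ≠ 0) : emEnt x (∅ : Finset (Fin d)) = 0 := by
  unfold emEnt margP
  rw [Finset.sum_eq_zero, neg_zero]
  intro z _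
  have h1 : (Finset.univ.filter fun i : Fin n =>
      ∀ j : ((∅ : Finset (Fin d)) : Finset (Fin d)), x i j.1 = z j) = Finset.univ := by
    apply Finset.filter_true_of_mem
    intro i _ j
    exact absurd j.2 (Finset.notMem_empty _)
  rw [h1]
  simp [div_self hn]


/-- for `d = 3`, the global uniqueness Shapley value of the first variable is
`φ^{1:n}_1 = (1/3)𝓗({1}) + (1/6)𝓗({1}|{2}) + (1/6)𝓗({1}|{3}) + (1/3)𝓗({1}|{2,3})`
(variables `1,2,3` are indices `0,1,2 : Fin 3`). -/
theorem globalUniquenessShapley_three_vars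
    (n : ℕ) (hn : 1 ≤ n)
    (X : Fin 3 → Type) [∀ j, Fintype (X j)] [∀ j, DecidableEq (X j)]
    (x : Fin n → ∀ j, X j) :
    uShapGlobal x 0
      = (1 / 3) * emEnt x {0}
        + (1 / 6) * (emEnt x {0, 1} - emEnt x {1})
        + (1 / 6) * (emEnt x {0, 2} - emEnt x {2})
        + (1 / 3) * (emEnt x {0, 1, 2} - emEnt x {1, 2}) := by
  have hn' : (n:ℝ) ≠ 0 := Nat.cast_ne_zero.mpr (by omega)
  have hP : ((Finset.univ : Finset (Fin 3)).erase 0).powerset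
      = {∅, {1}, {2}, {1,2}} := by decide
  have hexp : ∀ t : Fin n, ∑ u ∈ ({∅,{1},{2},{1,2}} : Finset (Finset (Fin 3))),
      (((3-1).choose u.card : ℕ) : ℝ)⁻¹ * (uVal x t (insert 0 u) - uVal x t u)
      = (uVal x t {0} - uVal x t ∅) + 2⁻¹ * (uVal x t {0,1} - uVal x t {1})
        + 2⁻¹ * (uVal x t {0,2} - uVal x t {2}) + (uVal x t {0,1,2} - uVal x t {1,2}) := by
    intro t
    rw [Finset.sum_insert (by decide), Finset.sum_insert (by decide),
      Finset.sum_insert (by decide), Finset.sum_singleton]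
    norm_num [show insert (0:Fin 3) (∅ : Finset (Fin 3)) = {0} from by decide,
      show insert (0:Fin 3) ({1} : Finset (Fin 3)) = {0,1} from by decide,
      show insert (0:Fin 3) ({2} : Finset (Fin 3)) = {0,2} from by decide,
      show insert (0:Fin 3) ({1,2} : Finset (Fin 3)) = {0,1,2} from by decide,
      show (({1,2} : Finset (Fin 3)).card) = 2 from by decide,
      show (({1} : Finset (Fin 3)).card) = 1 from by decide,
      show (({2} : Finset (Fin 3)).card) = 1 from by decide]
    ring
  unfold uShapGlobal uShap
  rw [hP]
  simp only [hexp, ← Finset.mul_sum, Finset.sum_add_distrib, Finset.sum_sub_distrib]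
  rw [sum_uVal x hn', sum_uVal x hn', sum_uVal x hn', sum_uVal x hn',
    sum_uVal x hn', sum_uVal x hn', sum_uVal x hn', sum_uVal x hn',
    emEnt_empty x hn']
  field_simp
  ring
end

section
/- Suppose d = 3 and variable 3 duplicates variable 1, i.e., x_{i3} = x_{i1} for all i ∈ {1,…,n} (with 𝒳_3 = 𝒳_1). Then the global uniqueness Shapley value of variable 1 satisfies φ^{1:n}_1 = (1/3)·𝓗({1}) + (1/6)·𝓗({1}|{2}). -/
open Finset

variable {n d : ℕ} {X : Fin d → Type} [∀ j, Fintype (X j)] [∀ j, DecidableEq (X j)]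

set_option linter.unusedSectionVars false

lemma my_cohort_congr (x : Fin n → ∀ j, X j) (t : Fin n) {u v : Finset (Fin d)}
    (h : ∀ i, (∀ j ∈ u, x i j = x t j) ↔ (∀ j ∈ v, x i j = x t j)) :
    cohortN x t u = cohortN x t v := by
  unfold cohortN
  congr 1
  exact Finset.filter_congr fun i _ => h i

lemma my_uVal_congr (x : Fin n → ∀ j, X j) (t : Fin n) {u v : Finset (Fin d)}
    (h : cohortN x t u = cohortN x t v) : uVal x t u = uVal x t v := by
  unfold uVal; rw [h]

lemma my_sum_uVal (hn : n ≠ 0) (x : Fin n → ∀ j, X j) (u : Finset (Fin d)) :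
    ∑ t, uVal x t u = (n : ℝ) * emEnt x u := by
  classical
  set g : Fin n → (∀ j : u, X j.1) := fun t j => x t j.1 with hg
  have hcoh : ∀ t, cohortN x t u
      = (Finset.univ.filter fun i => g i = g t).card := by
    intro t
    unfold cohortN
    congr 1
    apply Finset.filter_congr
    intro i _
    simp [hg, funext_iff, Subtype.forall]
  have hmarg : ∀ z, margP x u z
      = ((Finset.univ.filter fun i => g i = z).card : ℝ) / n := by
    intro z
    unfold margP
    congr 3
    apply Finset.filter_congr
    intro i _
    simp [hg, funext_iff]
  rw [← Finset.sum_fiberwise Finset.univ g (fun t => uVal x t u)]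
  unfold emEnt
  rw [mul_neg, Finset.mul_sum, ← Finset.sum_neg_distrib]
  apply Finset.sum_congr rfl
  intro z _
  have hc : ∀ t ∈ Finset.univ.filter fun t => g t = z,
      uVal x t u = -Real.logb 2
        (((Finset.univ.filter fun i => g i = z).card : ℝ) / n) := by
    intro t ht
    simp only [Finset.mem_filter] at ht
    unfold uVal
    rw [hcoh t, ht.2]
  rw [Finset.sum_congr rfl hc, Finset.sum_const, nsmul_eq_mul, hmarg z]
  have hn' : (n : ℝ) ≠ 0 := Nat.cast_ne_zero.mpr hn
  field_simp

/-- with `d = 3` and variable `3` (index `2`) duplicating variable `1`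
(index `0`), i.e. `𝒳_3 = 𝒳_1` and `x_{i3} = x_{i1}` for all `i`, the global uniqueness
Shapley value of variable `1` is `(1/3)𝓗({1}) + (1/6)𝓗({1}|{2})`. -/
theorem globalUniquenessShapley_duplicate_var1
    (n : ℕ) (hn : 1 ≤ n)
    (X : Fin 3 → Type) [∀ j, Fintype (X j)] [∀ j, DecidableEq (X j)]
    (hX : X 2 = X 0)
    (x : Fin n → ∀ j, X j)
    (hdup : ∀ i, x i 2 = cast hX.symm (x i 0)) :
    uShapGlobal x 0
      = (1 / 3) * emEnt x {0} + (1 / 6) * (emEnt x {0, 1} - emEnt x {1}) := by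
  have hn0 : n ≠ 0 := Nat.one_le_iff_ne_zero.mp hn
  have hnr : (n : ℝ) ≠ 0 := Nat.cast_ne_zero.mpr hn0
  have key : ∀ i t : Fin n, (x i 2 = x t 2) ↔ (x i 0 = x t 0) := by
    intro i t
    rw [hdup i, hdup t]
    exact cast_inj hX.symm
  -- cohort equalities
  have h2 : ∀ t, uVal x t {2} = uVal x t {0} := fun t =>
    my_uVal_congr x t (my_cohort_congr x t fun i => by
      have := key i t; simp only [Finset.mem_singleton, forall_eq]; tauto)
  have h02 : ∀ t, uVal x t {0, 2} = uVal x t {0} := fun t =>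
    my_uVal_congr x t (my_cohort_congr x t fun i => by
      have := key i t
      simp only [Finset.mem_insert, Finset.mem_singleton, forall_eq_or_imp, forall_eq]
      tauto)
  have h012 : ∀ t, uVal x t {0, 1, 2} = uVal x t {0, 1} := fun t =>
    my_uVal_congr x t (my_cohort_congr x t fun i => by
      have := key i t
      simp only [Finset.mem_insert, Finset.mem_singleton, forall_eq_or_imp, forall_eq]
      tauto)
  have h12 : ∀ t, uVal x t {1, 2} = uVal x t {0, 1} := fun t =>
    my_uVal_congr x t (my_cohort_congr x t fun i => by
      have := key i t
      simp only [Finset.mem_insert, Finset.mem_singleton, forall_eq_or_imp, forall_eq]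
      tauto)
  have hvempty : ∀ t, uVal x t ∅ = 0 := by
    intro t
    unfold uVal cohortN
    simp [div_self hnr]
  have hshap : ∀ t, uShap x t 0
      = (3 : ℝ)⁻¹ * (uVal x t {0} + (1/2) * (uVal x t {0,1} - uVal x t {1})) := by
    intro t
    unfold uShap
    rw [show (((Finset.univ : Finset (Fin 3)).erase 0).powerset)
        = {∅, {1}, {2}, ({1,2} : Finset (Fin 3))} from by decide]
    rw [Finset.sum_insert (by decide), Finset.sum_insert (by decide),
        Finset.sum_insert (by decide), Finset.sum_singleton]
    rw [show insert (0:Fin 3) ∅ = ({0} : Finset (Fin 3)) from by decide,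
        show insert (0:Fin 3) {1} = ({0,1} : Finset (Fin 3)) from by decide,
        show insert (0:Fin 3) {2} = ({0,2} : Finset (Fin 3)) from by decide,
        show insert (0:Fin 3) {1,2} = ({0,1,2} : Finset (Fin 3)) from by decide]
    rw [h2 t, h02 t, h012 t, h12 t, hvempty t]
    norm_num [show (({1} : Finset (Fin 3))).card = 1 from by decide,
      show (({2} : Finset (Fin 3))).card = 1 from by decide,
      show (({1,2} : Finset (Fin 3))).card = 2 from by decide]
  unfold uShapGlobal
  rw [Finset.sum_congr rfl fun t _ => hshap t]
  rw [← Finset.mul_sum, Finset.sum_add_distrib, ← Finset.mul_sum,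
      Finset.sum_sub_distrib, my_sum_uVal hn0 x {0}, my_sum_uVal hn0 x {0,1},
      my_sum_uVal hn0 x {1}]
  field_simp
  ring
end

section
/- Suppose the data set is augmented with an additional variable indexed 0 whose values x_{i0} are pairwise distinct across subjects (a database key). Then for every subject t and every original variable j ∈ {1,…,d}, the uniqueness Shapley value of variable j computed from the d+1 variables {0,1,…,d} equals (1/(d+1)) Σ_{u ⊆ {1,…,d}∖{j}} binom(d,|u|)⁻¹ (val_t(u∪{j}) − val_t(u)), where val_t is the value function computed from the original d variables only. -/
open Finset

variable {n d : ℕ} {X : Fin d → Type} [∀ j, Fintype (X j)] [∀ j, DecidableEq (X j)]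

lemma cohort_key_one {n d : ℕ} {X : Fin (d + 1) → Type} [∀ j, Fintype (X j)]
    [∀ j, DecidableEq (X j)] (x : Fin n → ∀ j, X j)
    (hkey : ∀ i i' : Fin n, x i 0 = x i' 0 → i = i')
    (t : Fin n) (u : Finset (Fin (d + 1))) (h0 : (0 : Fin (d + 1)) ∈ u) :
    cohortN x t u = 1 := by
  unfold cohortN
  rw [Finset.card_eq_one]
  refine ⟨t, ?_⟩
  ext i
  simp only [Finset.mem_filter, Finset.mem_univ, true_and, Finset.mem_singleton]
  constructor
  · intro h; exact hkey i t (h 0 h0)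
  · rintro rfl j hj; rfl

/-- augment the `d` original variables (indices `1,…,d`, here the nonzero
indices of `Fin (d+1)`) with a database key (index `0`) taking pairwise distinct values.
Then the uniqueness Shapley value of an original variable `j ≠ 0`, computed from all `d+1`
variables, equals `(1/(d+1)) Σ_{u ⊆ originals∖{j}} binom(d,|u|)⁻¹ (val_t(u∪{j}) − val_t(u))`,
where `val_t` is the value function of the original variables (cohorts on `u ∌ 0` depend
only on the original variables). -/
theorem uniquenessShapley_with_database_key
    (n d : ℕ) (hn : 1 ≤ n) (hd : 1 ≤ d)
    (X : Fin (d + 1) → Type) [∀ j, Fintype (X j)] [∀ j, DecidableEq (X j)]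
    (x : Fin n → ∀ j, X j)
    (hkey : ∀ i i' : Fin n, x i 0 = x i' 0 → i = i') :
    ∀ (t : Fin n) (j : Fin (d + 1)), j ≠ 0 →
      uShap x t j
        = ((d : ℝ) + 1)⁻¹
            * ∑ u ∈ (((Finset.univ : Finset (Fin (d + 1))).erase 0).erase j).powerset,
                (d.choose u.card : ℝ)⁻¹ * (uVal x t (insert j u) - uVal x t u) := by
  intro t j hj
  have h0j : (0 : Fin (d + 1)) ∈ (Finset.univ : Finset (Fin (d + 1))).erase j :=
    Finset.mem_erase.mpr ⟨Ne.symm hj, Finset.mem_univ _⟩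
  have hS : (Finset.univ : Finset (Fin (d + 1))).erase j
      = insert 0 ((((Finset.univ : Finset (Fin (d + 1))).erase 0).erase j)) := by
    rw [Finset.erase_right_comm, Finset.insert_erase h0j]
  have h0not : (0 : Fin (d + 1)) ∉ (((Finset.univ : Finset (Fin (d + 1))).erase 0).erase j) := by
    intro h
    exact absurd (Finset.mem_of_mem_erase h) (by simp)
  unfold uShap
  rw [hS, Finset.sum_powerset_insert h0not]
  have hzero : ∀ u ∈ (((Finset.univ : Finset (Fin (d + 1))).erase 0).erase j).powerset,
      ((d + 1 - 1).choose (insert (0 : Fin (d + 1)) u).card : ℝ)⁻¹ *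
        (uVal x t (insert j (insert 0 u)) - uVal x t (insert 0 u)) = 0 := by
    intro u _
    have h1 : cohortN x t (insert j (insert (0 : Fin (d + 1)) u)) = 1 :=
      cohort_key_one x hkey t _ (by simp)
    have h2 : cohortN x t (insert (0 : Fin (d + 1)) u) = 1 :=
      cohort_key_one x hkey t _ (by simp)
    unfold uVal
    rw [h1, h2]
    ring
  rw [Finset.sum_congr rfl hzero, Finset.sum_const_zero, add_zero]
  have : ((d + 1 : ℕ) : ℝ)⁻¹ = ((d : ℝ) + 1)⁻¹ := by push_cast; ring
  rw [this]
  congr 1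
end

section
/- If some variable j₀ ∈ {1,…,d} is a database key, i.e., x_{ij₀} = x_{tj₀} implies i = t, then N_t(u) = 1 for every subject t and every subset u ⊆ {1,…,d} containing j₀, and consequently Σ_{j=1}^d φ_{t,j} = log₂ n for every subject t. -/
open Finset

variable {n d : ℕ} {X : Fin d → Type} [∀ j, Fintype (X j)] [∀ j, DecidableEq (X j)]

lemma coeff_eq (d k : ℕ) (hd : 1 ≤ d) (hk : k ≤ d) :
    (k : ℝ) * (((d - 1).choose (k - 1) : ℕ) : ℝ)⁻¹
      - ((d - k : ℕ) : ℝ) * (((d - 1).choose k : ℕ) : ℝ)⁻¹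
    = if k = d then (d : ℝ) else if k = 0 then -(d : ℝ) else 0 := by
  rcases eq_or_lt_of_le hk with rfl | hkd
  · simp [Nat.sub_self, Nat.choose_self]
  · rw [if_neg (Nat.ne_of_lt hkd)]
    rcases Nat.eq_zero_or_pos k with rfl | hk0
    · simp [Nat.choose_zero_right]
    · rw [if_neg (Nat.pos_iff_ne_zero.mp hk0)]
      have hb : 0 < (d - 1).choose (k - 1) := Nat.choose_pos (by omega)
      have hc : 0 < (d - 1).choose k := Nat.choose_pos (by omega)
      have hnat : (d - 1).choose k * k = (d - 1).choose (k - 1) * (d - k) := by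
        have := Nat.choose_succ_right_eq (d - 1) (k - 1)
        have hkk : k - 1 + 1 = k := by omega
        rw [hkk] at this
        rw [this]
        congr 1
        omega
      have hb' : ((((d - 1).choose (k - 1) : ℕ)) : ℝ) ≠ 0 := by positivity
      have hc' : ((((d - 1).choose k : ℕ)) : ℝ) ≠ 0 := by positivity
      have hr : ((d - 1).choose k : ℝ) * k = ((d - 1).choose (k - 1) : ℝ) * ((d - k : ℕ) : ℝ) := by
        exact_mod_cast hnat
      rw [Nat.cast_sub hk] at hr
      field_simp
      rw [Nat.cast_sub hk]
      linear_combination hr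

lemma powerset_erase_eq (d : ℕ) (j : Fin d) :
    ((univ : Finset (Fin d)).erase j).powerset
      = (univ : Finset (Fin d)).powerset.filter (fun S => j ∉ S) := by
  ext S
  simp [subset_erase]

lemma reindex (d : ℕ) (j : Fin d) (g : Finset (Fin d) → ℝ) :
    ∑ u ∈ ((univ : Finset (Fin d)).erase j).powerset, g (insert j u)
      = ∑ S ∈ (univ : Finset (Fin d)).powerset.filter (fun S => j ∈ S), g S := by
  apply Finset.sum_nbij' (fun u => insert j u) (fun S => S.erase j)
  · intro u hu
    simp only [mem_powerset, mem_filter] at *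
    exact ⟨subset_univ _, mem_insert_self _ _⟩
  · intro S hS
    simp only [mem_powerset, mem_filter] at *
    exact erase_subset_erase _ (subset_univ _)
  · intro u hu
    simp only [mem_powerset] at hu
    exact erase_insert (fun h => (mem_erase.mp (hu h)).1 rfl)
  · intro S hS
    simp only [mem_powerset, mem_filter] at hS
    exact insert_erase hS.2
  · intro u hu; rfl

lemma telescope (d : ℕ) (hd : 1 ≤ d) (v : Finset (Fin d) → ℝ) :
    ∑ j : Fin d, (d : ℝ)⁻¹ * ∑ u ∈ ((univ : Finset (Fin d)).erase j).powerset,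
      ((d - 1).choose u.card : ℝ)⁻¹ * (v (insert j u) - v u)
    = v univ - v ∅ := by
  have hd0 : (d : ℝ) ≠ 0 := by positivity
  -- split each inner sum
  have step1 : ∀ j : Fin d,
      ∑ u ∈ ((univ : Finset (Fin d)).erase j).powerset,
        ((d - 1).choose u.card : ℝ)⁻¹ * (v (insert j u) - v u)
      = (∑ S ∈ (univ : Finset (Fin d)).powerset,
          if j ∈ S then ((d - 1).choose (S.card - 1) : ℝ)⁻¹ * v S else 0)
        - (∑ S ∈ (univ : Finset (Fin d)).powerset,
          if j ∉ S then ((d - 1).choose S.card : ℝ)⁻¹ * v S else 0) := by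
    intro j
    rw [← Finset.sum_filter, ← Finset.sum_filter, ← powerset_erase_eq,
      ← reindex d j (fun S => ((d - 1).choose (S.card - 1) : ℝ)⁻¹ * v S),
      ← Finset.sum_sub_distrib]
    apply Finset.sum_congr rfl
    intro u hu
    simp only [mem_powerset] at hu
    have hj : j ∉ u := fun h => (mem_erase.mp (hu h)).1 rfl
    rw [card_insert_of_notMem hj]
    simp only [Nat.add_sub_cancel]
    ring
  calc ∑ j : Fin d, (d : ℝ)⁻¹ * ∑ u ∈ ((univ : Finset (Fin d)).erase j).powerset,
        ((d - 1).choose u.card : ℝ)⁻¹ * (v (insert j u) - v u)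
      = (d : ℝ)⁻¹ * ∑ S ∈ (univ : Finset (Fin d)).powerset,
          ((S.card : ℝ) * ((d - 1).choose (S.card - 1) : ℝ)⁻¹
            - ((d - S.card : ℕ) : ℝ) * ((d - 1).choose S.card : ℝ)⁻¹) * v S := by
        rw [← Finset.mul_sum]
        congr 1
        simp_rw [step1]
        rw [Finset.sum_sub_distrib, Finset.sum_comm, Finset.sum_comm (s := univ)]
        rw [← Finset.sum_sub_distrib]
        apply Finset.sum_congr rfl
        intro S hS
        simp only [mem_powerset] at hS
        rw [Finset.sum_ite_mem, Finset.univ_inter, Finset.sum_const]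
        have : ∑ j : Fin d, (if j ∉ S then ((d - 1).choose S.card : ℝ)⁻¹ * v S else 0)
            = (d - S.card : ℕ) • (((d - 1).choose S.card : ℝ)⁻¹ * v S) := by
          simp only [← Finset.mem_compl]
          rw [Finset.sum_ite_mem, Finset.univ_inter, Finset.sum_const, Finset.card_compl,
            Fintype.card_fin]
        rw [this]
        ring
  _ = v univ - v ∅ := by
        haveI : Nonempty (Fin d) := ⟨⟨0, hd⟩⟩
        have huniv : (univ : Finset (Fin d)) ≠ ∅ := Finset.univ_nonempty.ne_empty
        rw [Finset.mul_sum]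
        have key : ∀ S ∈ (univ : Finset (Fin d)).powerset,
            (d : ℝ)⁻¹ * (((S.card : ℝ) * ((d - 1).choose (S.card - 1) : ℝ)⁻¹
                - ((d - S.card : ℕ) : ℝ) * ((d - 1).choose S.card : ℝ)⁻¹) * v S)
            = (if S = univ then v S else 0) + (if S = ∅ then -v S else 0) := by
          intro S hS
          simp only [mem_powerset] at hS
          have hcard : S.card ≤ d := by
            have := Finset.card_le_card hS
            simpa using this
          have h1 : S.card = d ↔ S = univ := by
            constructor
            · intro h
              apply Finset.eq_univ_of_card
              simpa using h
            · intro h; rw [h]; simp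
          have h2 : S.card = 0 ↔ S = ∅ := Finset.card_eq_zero
          have hd0 : (d : ℝ) ≠ 0 := by positivity
          rw [coeff_eq d S.card hd hcard]
          by_cases hu : S = univ
          · have hc : S.card = d := h1.mpr hu
            have hne : S ≠ ∅ := hu ▸ huniv
            rw [if_pos hc, if_pos hu, if_neg hne]
            field_simp
            ring
          · have hc : S.card ≠ d := fun h => hu (h1.mp h)
            rw [if_neg hc, if_neg hu]
            by_cases he : S = ∅
            · rw [if_pos (h2.mpr he), if_pos he]
              field_simp
              ring
            · rw [if_neg (fun h => he (h2.mp h)), if_neg he]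
              simp
        rw [Finset.sum_congr rfl key, Finset.sum_add_distrib,
          Finset.sum_ite_eq' _ (univ : Finset (Fin d)) v,
          Finset.sum_ite_eq' _ (∅ : Finset (Fin d)) (fun S => -v S),
          if_pos (Finset.mem_powerset_self _), if_pos (Finset.empty_mem_powerset _)]
        ring


/-- if variable `j₀` is a database key (`x_{ij₀} = x_{tj₀}` implies `i = t`),
then `N_t(u) = 1` whenever `j₀ ∈ u`, and the uniqueness Shapley values of every subject
sum to `log₂ n`. -/
theorem uniquenessShapley_key_variable
    (n d : ℕ) (hn : 1 ≤ n) (hd : 1 ≤ d)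
    (X : Fin d → Type) [∀ j, Fintype (X j)] [∀ j, DecidableEq (X j)]
    (x : Fin n → ∀ j, X j) (j₀ : Fin d)
    (hkey : ∀ i t : Fin n, x i j₀ = x t j₀ → i = t) :
    (∀ (t : Fin n) (u : Finset (Fin d)), j₀ ∈ u → cohortN x t u = 1) ∧
    (∀ t : Fin n, ∑ j : Fin d, uShap x t j = Real.logb 2 n) := by
  have hN1 : ∀ (t : Fin n) (u : Finset (Fin d)), j₀ ∈ u → cohortN x t u = 1 := by
    intro t u hj
    unfold cohortN
    have : (Finset.univ.filter fun i : Fin n => ∀ j ∈ u, x i j = x t j) = {t} := by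
      ext i
      simp only [mem_filter, mem_univ, true_and, mem_singleton]
      constructor
      · intro h
        exact hkey i t (h j₀ hj)
      · rintro rfl
        intro j _
        rfl
    rw [this, card_singleton]
  refine ⟨hN1, fun t => ?_⟩
  have hvuniv : uVal x t univ = Real.logb 2 n := by
    unfold uVal
    rw [hN1 t univ (mem_univ _)]
    have hn0 : (n : ℝ) ≠ 0 := by positivity
    rw [Nat.cast_one, one_div, Real.logb_inv, neg_neg]
  have hvempty : uVal x t ∅ = 0 := by
    unfold uVal
    have : cohortN x t ∅ = n := by
      unfold cohortN
      simp
    rw [this]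
    have hn0 : (n : ℝ) ≠ 0 := by positivity
    rw [div_self hn0, Real.logb_one, neg_zero]
  have := telescope d hd (uVal x t)
  calc ∑ j : Fin d, uShap x t j
      = ∑ j : Fin d, (d : ℝ)⁻¹ * ∑ u ∈ ((univ : Finset (Fin d)).erase j).powerset,
        ((d - 1).choose u.card : ℝ)⁻¹ * (uVal x t (insert j u) - uVal x t u) := rfl
    _ = uVal x t univ - uVal x t ∅ := telescope d hd (uVal x t)
    _ = Real.logb 2 n := by rw [hvuniv, hvempty, sub_zero]
end
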